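/- If r is a tournament on a finite set V, then the number of automorphisms of (V, r) — permutations g of V such that for all x, y ∈ V, r(g x, g y) holds if and only if r(x, y) holds — is odd. -/
import Mathlib

def tournamentAut {V : Type} (r : V → V → Prop) : Subgroup (Equiv.Perm V) where
  carrier := {g | ∀ x y : V, r (g x) (g y) ↔ r x y}
  one_mem' := by intro x y; rfl
  mul_mem' := by
    intro g h hg hh x y
    simpa [Equiv.Perm.mul_apply] using (hg (h x) (h y)).trans (hh x y)
  inv_mem' := by
    intro g hg x y
    simpa using (hg (g⁻¹ x) (g⁻¹ y)).symm

/-- The number of automorphisms of a finite tournament is odd. -/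
theorem tournament_card_aut_odd {V : Type} [Fintype V] (r : V → V → Prop)
    (hirr : ∀ x, ¬ r x x) (htot : ∀ x y : V, x ≠ y → (r x y ↔ ¬ r y x)) :
    Odd (Nat.card {g : Equiv.Perm V // ∀ x y : V, r (g x) (g y) ↔ r x y}) := by
  have hcard : Nat.card {g : Equiv.Perm V // ∀ x y : V, r (g x) (g y) ↔ r x y}
      = Nat.card (tournamentAut r) := by
    apply Nat.card_congr
    exact Equiv.subtypeEquivRight (fun g => Iff.rfl)
  rw [hcard]
  haveI : Fintype (tournamentAut r) := Fintype.ofFinite _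
  rw [← Nat.not_even_iff_odd, even_iff_two_dvd, Nat.card_eq_fintype_card]
  intro h2
  obtain ⟨g, hg⟩ := exists_prime_orderOf_dvd_card (G := tournamentAut r) 2 h2
  have hg2 : g * g = 1 := by
    have := pow_orderOf_eq_one g
    rwa [hg, pow_two] at this
  have hgne : g ≠ 1 := by
    intro h; rw [h] at hg; simp [orderOf_one] at hg
  obtain ⟨x, hx⟩ : ∃ x : V, (g : Equiv.Perm V) x ≠ x := by
    by_contra h
    push_neg at h
    apply hgne
    ext y
    exact h y
  have hggx : (g : Equiv.Perm V) ((g : Equiv.Perm V) x) = x := by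
    have : ((g * g : tournamentAut r) : Equiv.Perm V) x = x := by rw [hg2]; rfl
    simpa [Equiv.Perm.mul_apply] using this
  have h1 : r ((g : Equiv.Perm V) x) x ↔ r x ((g : Equiv.Perm V) x) := by
    have := g.2 x ((g : Equiv.Perm V) x)
    rwa [hggx] at this
  have h2' := htot x ((g : Equiv.Perm V) x) (Ne.symm hx)
  tauto
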